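/- Let p, q be positive integers, n = p + q, and let u be a descending shuffle in S_n. Let F_1 ⊂ F_2 ⊂ ⋯ ⊂ F_n = ℂ^n be a complete flag. If dim(F_i ∩ E_p) = r_u(i,p) for all i ∈ {1,…,n}, then dim(F_i ∩ E_j) ≥ r_u(i,j) for all i, j ∈ {1,…,n}. (That is, any flag satisfying the p-th column rank conditions of u lies in the Schubert variety X_u.) -/

import Mathlib

/-- The rank function `r_w(i,j) = #{k ≤ i : w(k) ≤ j}` (positions and values 1-indexed). -/
def rk {n : ℕ} (w : Equiv.Perm (Fin n)) (i j : ℕ) : ℕ :=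
  (Finset.univ.filter (fun k : Fin n => (k : ℕ) + 1 ≤ i ∧ (w k : ℕ) + 1 ≤ j)).card

/-- `u` is a descending shuffle of `p,…,1` and `n,…,p+1`. -/
def DescShuffle (p : ℕ) {n : ℕ} (u : Equiv.Perm (Fin n)) : Prop :=
  ∀ i j : Fin n, i < j →
    ((u i : ℕ) + 1 ≤ p ∧ (u j : ℕ) + 1 ≤ p → u j < u i) ∧
    (p < (u i : ℕ) + 1 ∧ p < (u j : ℕ) + 1 → u j < u i)

/-- `E j`: the span of the first `j` standard basis vectors of `ℂ^n`. -/
noncomputable def stdE (n j : ℕ) : Submodule ℂ (Fin n → ℂ) :=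
  Submodule.span ℂ ((fun k : Fin n => (Pi.single k 1 : Fin n → ℂ)) ''
    {k : Fin n | (k : ℕ) + 1 ≤ j})

lemma card_filter_coe_lt (n j : ℕ) (hj : j ≤ n) :
    (Finset.univ.filter fun k : Fin n => (k : ℕ) < j).card = j := by
  classical
  have h : (Finset.univ.filter fun k : Fin n => (k : ℕ) < j).card = (Finset.range j).card := by
    apply Finset.card_nbij (fun k : Fin n => (k : ℕ))
    · intro a ha; simp at ha ⊢; omega
    · intro a _ b _ h; exact Fin.val_injective h
    · intro b hb
      simp at hb
      exact ⟨⟨b, lt_of_lt_of_le hb hj⟩, by simp [hb], rfl⟩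
  simpa using h

lemma stdE_mono (n : ℕ) {j j' : ℕ} (h : j ≤ j') : stdE n j ≤ stdE n j' :=
  Submodule.span_mono (Set.image_mono fun k hk => le_trans hk h)

lemma finrank_stdE (n j : ℕ) (hj : j ≤ n) :
    Module.finrank ℂ (stdE n j) = j := by
  classical
  have hli : LinearIndependent ℂ
      (fun k : {k : Fin n // (k : ℕ) + 1 ≤ j} => (Pi.single (k : Fin n) 1 : Fin n → ℂ)) := by
    have h2 := (Pi.basisFun ℂ (Fin n)).linearIndependent.comp
      (fun k : {k : Fin n // (k : ℕ) + 1 ≤ j} => (k : Fin n)) Subtype.val_injective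
    simpa [Function.comp_def, Pi.basisFun_apply] using h2
  have hs : ((fun k : Fin n => (Pi.single k 1 : Fin n → ℂ)) '' {k : Fin n | (k : ℕ) + 1 ≤ j})
      = Set.range (fun k : {k : Fin n // (k : ℕ) + 1 ≤ j} =>
          (Pi.single (k : Fin n) 1 : Fin n → ℂ)) :=
    Set.image_eq_range _ _
  rw [stdE, hs, finrank_span_eq_card hli, Fintype.card_subtype]
  have : (Finset.univ.filter fun k : Fin n => (k : ℕ) + 1 ≤ j)
      = (Finset.univ.filter fun k : Fin n => (k : ℕ) < j) := by
    apply Finset.filter_congr; intro k _; constructor <;> (intro; omega)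
  rw [this, card_filter_coe_lt n j hj]

theorem stmt14 (p q n : ℕ) (hp : 0 < p) (hq : 0 < q) (hn : n = p + q)
    (u : Equiv.Perm (Fin n)) (hu : DescShuffle p u)
    (F : Fin n → Submodule ℂ (Fin n → ℂ))
    (hchain : ∀ i j : Fin n, i ≤ j → F i ≤ F j)
    (hdim : ∀ i : Fin n, Module.finrank ℂ (F i) = (i : ℕ) + 1)
    (hyp : ∀ i : Fin n, Module.finrank ℂ ↥(F i ⊓ stdE n p) = rk u ((i : ℕ) + 1) p) :
    ∀ i : Fin n, ∀ j : ℕ, 1 ≤ j → j ≤ n →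
      rk u ((i : ℕ) + 1) j ≤ Module.finrank ℂ ↥(F i ⊓ stdE n j) := by
  classical
  intro i j hj1 hjn
  have hpn : p ≤ n := by omega
  set Sj := Finset.univ.filter
      (fun k : Fin n => (k : ℕ) + 1 ≤ (i : ℕ) + 1 ∧ (u k : ℕ) + 1 ≤ j) with hSjdef
  set Sp := Finset.univ.filter
      (fun k : Fin n => (k : ℕ) + 1 ≤ (i : ℕ) + 1 ∧ (u k : ℕ) + 1 ≤ p) with hSpdef
  have hrkj : rk u ((i : ℕ) + 1) j = Sj.card := rfl
  have hrkp : rk u ((i : ℕ) + 1) p = Sp.card := rfl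
  rcases le_or_gt j p with hjp | hpj
  · -- case j ≤ p
    rcases Nat.eq_zero_or_pos Sj.card with h0 | hpos
    · rw [hrkj, h0]; exact Nat.zero_le _
    obtain ⟨k0, hk0⟩ := Finset.card_pos.mp hpos
    simp only [hSjdef, Finset.mem_filter, Finset.mem_univ, true_and] at hk0
    -- combinatorial: Sj.card + p ≤ Sp.card + j
    have hsub : Sj ⊆ Sp := by
      intro k hk
      simp only [hSjdef, hSpdef, Finset.mem_filter, Finset.mem_univ, true_and] at hk ⊢
      exact ⟨hk.1, le_trans hk.2 hjp⟩
    have hinj : (Finset.Ico j p).card ≤ (Sp \ Sj).card := by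
      apply Finset.card_le_card_of_injOn
        (fun m => u.symm ⟨m % n, Nat.mod_lt _ (by omega)⟩)
      · intro m hm
        simp only [Finset.coe_Ico, Set.mem_Ico, Finset.mem_Ico] at hm
        have hmn : m < n := lt_of_lt_of_le hm.2 hpn
        have hmod : m % n = m := Nat.mod_eq_of_lt hmn
        set km := u.symm ⟨m % n, Nat.mod_lt _ (by omega : 0 < n)⟩ with hkm
        have hukm : (u km : ℕ) = m := by
          simp [hkm, hmod]
        have hlt : km < k0 := by
          rcases lt_trichotomy km k0 with h | h | h
          · exact h
          · exfalso
            have := hk0.2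
            rw [h] at hukm
            omega
          · exfalso
            have := (hu k0 km h).1 ⟨le_trans hk0.2 hjp, by omega⟩
            have : (u km : ℕ) < (u k0 : ℕ) := this
            omega
        show km ∈ ((Sp \ Sj : Finset (Fin n)) : Set (Fin n))
        simp only [Finset.mem_coe, Finset.mem_sdiff, hSjdef, hSpdef, Finset.mem_filter, Finset.mem_univ,
          true_and, not_and, not_le]
        have hki : (km : ℕ) < (k0 : ℕ) := hlt
        refine ⟨⟨by omega, by omega⟩, ?_⟩
        intro _
        omega
      · intro a ha b hb hab
        simp only [Finset.coe_Ico, Set.mem_Ico] at ha hb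
        have := u.symm.injective hab
        have : a % n = b % n := congrArg Fin.val this
        rw [Nat.mod_eq_of_lt (lt_of_lt_of_le ha.2 hpn),
            Nat.mod_eq_of_lt (lt_of_lt_of_le hb.2 hpn)] at this
        exact this
    rw [Finset.card_sdiff_of_subset hsub, Nat.card_Ico] at hinj
    have hcard_le : Sj.card ≤ Sp.card := Finset.card_le_card hsub
    -- geometric
    have hEjp : stdE n j ≤ stdE n p := stdE_mono n hjp
    have key := Submodule.finrank_sup_add_finrank_inf_eq (F i ⊓ stdE n p) (stdE n j)
    have h1 : (F i ⊓ stdE n p) ⊓ stdE n j = F i ⊓ stdE n j := by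
      rw [inf_assoc, inf_eq_right.mpr hEjp]
    have h2 : Module.finrank ℂ ↥((F i ⊓ stdE n p) ⊔ stdE n j) ≤ p := by
      have hle : (F i ⊓ stdE n p) ⊔ stdE n j ≤ stdE n p := sup_le inf_le_right hEjp
      calc Module.finrank ℂ ↥((F i ⊓ stdE n p) ⊔ stdE n j)
          ≤ Module.finrank ℂ (stdE n p) := Submodule.finrank_mono hle
        _ = p := finrank_stdE n p hpn
    rw [h1, hyp i, hrkp, finrank_stdE n j hjn] at key
    rw [hrkj]
    omega
  · -- case p < j
    have hsub : Sp ⊆ Sj := by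
      intro k hk
      simp only [hSjdef, hSpdef, Finset.mem_filter, Finset.mem_univ, true_and] at hk ⊢
      exact ⟨hk.1, by omega⟩
    rcases Finset.eq_empty_or_nonempty (Sj \ Sp) with hempty | ⟨k0, hk0⟩
    · have heq : Sj = Sp :=
        Finset.Subset.antisymm (Finset.sdiff_eq_empty_iff_subset.mp hempty) hsub
      rw [hrkj, heq, ← hrkp, ← hyp i]
      exact Submodule.finrank_mono (inf_le_inf_left _ (stdE_mono n (le_of_lt hpj)))
    · simp only [Finset.mem_sdiff, hSjdef, hSpdef, Finset.mem_filter, Finset.mem_univ,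
        true_and, not_and, not_le] at hk0
      obtain ⟨⟨hk0i, hk0j⟩, hk0p⟩ := hk0
      have hk0p' : p < (u k0 : ℕ) + 1 := hk0p (by omega)
      set P := Finset.univ.filter (fun k : Fin n => (k : ℕ) + 1 ≤ (i : ℕ) + 1) with hPdef
      have hPsub : Sj ⊆ P := by
        intro k hk
        simp only [hSjdef, hPdef, Finset.mem_filter, Finset.mem_univ, true_and] at hk ⊢
        exact hk.1
      have hPcard : P.card = (i : ℕ) + 1 := by
        have : P = Finset.univ.filter (fun k : Fin n => (k : ℕ) < (i : ℕ) + 1) := by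
          apply Finset.filter_congr; intro k _; constructor <;> (intro; omega)
        rw [this, card_filter_coe_lt n ((i : ℕ) + 1) i.isLt]
      have hinj : (Finset.Ico j n).card ≤ (P \ Sj).card := by
        apply Finset.card_le_card_of_injOn
          (fun m => u.symm ⟨m % n, Nat.mod_lt _ (by omega)⟩)
        · intro m hm
          simp only [Finset.coe_Ico, Set.mem_Ico, Finset.mem_Ico] at hm
          have hmod : m % n = m := Nat.mod_eq_of_lt hm.2
          set km := u.symm ⟨m % n, Nat.mod_lt _ (by omega : 0 < n)⟩ with hkm
          have hukm : (u km : ℕ) = m := by simp [hkm, hmod]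
          have hlt : km < k0 := by
            rcases lt_trichotomy km k0 with h | h | h
            · exact h
            · exfalso; rw [h] at hukm; omega
            · exfalso
              have := (hu k0 km h).2 ⟨hk0p', by omega⟩
              have : (u km : ℕ) < (u k0 : ℕ) := this
              omega
          show km ∈ ((P \ Sj : Finset (Fin n)) : Set (Fin n))
          simp only [Finset.mem_coe, Finset.mem_sdiff, hSjdef, hPdef, Finset.mem_filter, Finset.mem_univ,
            true_and, not_and, not_le]
          have hki : (km : ℕ) < (k0 : ℕ) := hlt
          exact ⟨by omega, fun _ => by omega⟩
        · intro a ha b hb hab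
          simp only [Finset.coe_Ico, Set.mem_Ico] at ha hb
          have h2 : a % n = b % n := congrArg Fin.val (u.symm.injective hab)
          rwa [Nat.mod_eq_of_lt ha.2, Nat.mod_eq_of_lt hb.2] at h2
      rw [Finset.card_sdiff_of_subset hPsub, Nat.card_Ico, hPcard] at hinj
      have hcard_le : Sj.card ≤ (i : ℕ) + 1 := hPcard ▸ Finset.card_le_card hPsub
      -- geometric
      have key := Submodule.finrank_sup_add_finrank_inf_eq (F i) (stdE n j)
      have h2 : Module.finrank ℂ ↥(F i ⊔ stdE n j) ≤ n := by
        have := Submodule.finrank_le (F i ⊔ stdE n j)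
        rwa [Module.finrank_fin_fun] at this
      rw [hdim i, finrank_stdE n j hjn] at key
      rw [hrkj]
      omega
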